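/- For φ ∈ (1, ∞) set D(φ) = 1/v(φ)² − φ ∫ r²/(1 + v(φ)·r)² dP(r), ṽ(φ) = 1/D(φ), and ṽ_g(φ) = ṽ(φ) · φ ∫ r²/(1 + v(φ)·r)² dP(r). Then: (i) D(φ) > 0 for every φ ∈ (1, ∞); (ii) ṽ and ṽ_g are continuous on (1, ∞); (iii) ṽ(φ) → +∞ and ṽ_g(φ) → +∞ as φ → 1⁺; and (iv) ṽ(φ) → 0 and ṽ_g(φ) → 0 as φ → ∞. -/

import Mathlib

open Filter MeasureTheory
open Set

noncomputable def gg (P : Measure ℝ) (x : ℝ) : ℝ := ∫ r, x * r / (1 + x * r) ∂P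
noncomputable def JJ (P : Measure ℝ) (x : ℝ) : ℝ := ∫ r, r ^ 2 / (1 + x * r) ^ 2 ∂P

lemma integrable_of_bound {P : Measure ℝ} [IsProbabilityMeasure P] {f : ℝ → ℝ}
    (hf : Measurable f) (C : ℝ) (h : ∀ᵐ r ∂P, |f r| ≤ C) : Integrable f P :=
  (integrable_const C).mono' hf.aestronglyMeasurable (by simpa [Real.norm_eq_abs] using h)

lemma integral_ge_const {P : Measure ℝ} [IsProbabilityMeasure P] {f : ℝ → ℝ} {c : ℝ}
    (hf : Integrable f P) (h : ∀ᵐ r ∂P, c ≤ f r) : c ≤ ∫ r, f r ∂P := by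
  have := integral_mono_ae (integrable_const c) hf h
  simpa using this

lemma integral_le_const {P : Measure ℝ} [IsProbabilityMeasure P] {f : ℝ → ℝ} {c : ℝ}
    (hf : Integrable f P) (h : ∀ᵐ r ∂P, f r ≤ c) : (∫ r, f r ∂P) ≤ c := by
  have := integral_mono_ae hf (integrable_const c) h
  simpa using this

lemma meas_f1 (x : ℝ) : Measurable fun r : ℝ => x * r / (1 + x * r) :=
  (measurable_const.mul measurable_id).div (measurable_const.add (measurable_const.mul measurable_id))

lemma meas_f2 (x : ℝ) : Measurable fun r : ℝ => r ^ 2 / (1 + x * r) ^ 2 :=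
  (measurable_id.pow_const 2).div ((measurable_const.add (measurable_const.mul measurable_id)).pow_const 2)

section

variable {a b : ℝ} {P : Measure ℝ} [IsProbabilityMeasure P]
variable (ha : 0 < a) (hab : a ≤ b) (hsupp : ∀ᵐ r ∂P, r ∈ Set.Icc a b)

set_option linter.unusedSectionVars false
include ha hab hsupp

lemma int_f1 {x : ℝ} (hx : 0 ≤ x) : Integrable (fun r : ℝ => x * r / (1 + x * r)) P := by
  refine integrable_of_bound (meas_f1 x) 1 (hsupp.mono fun r hr => ?_)
  have h1 : 0 < 1 + x * r := by nlinarith [hr.1, hr.2]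
  have hxr : 0 ≤ x * r := by nlinarith [hr.1]
  rw [abs_of_nonneg (div_nonneg hxr h1.le)]
  rw [div_le_one h1]; nlinarith

lemma int_f2 {x : ℝ} (hx : 0 ≤ x) : Integrable (fun r : ℝ => r ^ 2 / (1 + x * r) ^ 2) P := by
  refine integrable_of_bound (meas_f2 x) (b ^ 2) (hsupp.mono fun r hr => ?_)
  have h1 : 0 < 1 + x * r := by nlinarith [hr.1, hr.2]
  rw [abs_of_nonneg (by positivity)]
  calc r ^ 2 / (1 + x * r) ^ 2 ≤ r ^ 2 / 1 ^ 2 := by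
        have hxr : 0 ≤ x * r := by nlinarith [hr.1]
        apply div_le_div_of_nonneg_left (by positivity) (by norm_num) ?_
        · nlinarith
  _ ≤ b ^ 2 := by nlinarith [hr.1, hr.2]

lemma gg_strict {x y : ℝ} (hx : 0 ≤ x) (hxy : x < y) : gg P x < gg P y := by
  set c : ℝ := (y - x) * a / ((1 + x * b) * (1 + y * b)) with hc
  have hy : 0 ≤ y := hx.trans hxy.le
  have hcpos : 0 < c := by
    have hb0 : 0 ≤ b := ha.le.trans hab
    apply div_pos (by nlinarith) (by nlinarith [mul_nonneg hx hb0, mul_nonneg hy hb0])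
  have hint : Integrable (fun r : ℝ => y * r / (1 + y * r) - x * r / (1 + x * r)) P :=
    (int_f1 ha hab hsupp hy).sub (int_f1 ha hab hsupp hx)
  have hge : c ≤ ∫ r, (y * r / (1 + y * r) - x * r / (1 + x * r)) ∂P := by
    refine integral_ge_const hint (hsupp.mono fun r hr => ?_)
    have h1 : 0 < 1 + x * r := by nlinarith [hr.1, hr.2]
    have h2 : 0 < 1 + y * r := by nlinarith [hr.1, hr.2]
    have key : y * r / (1 + y * r) - x * r / (1 + x * r) = (y - x) * r / ((1 + x * r) * (1 + y * r)) := by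
      rw [div_sub_div _ _ h2.ne' h1.ne']; ring
    rw [key, hc]
    apply div_le_div₀ (by nlinarith [hr.1]) (by nlinarith [hr.1]) (by positivity)
    have hb1 : 1 + x * r ≤ 1 + x * b := by nlinarith [hr.2]
    have hb2 : 1 + y * r ≤ 1 + y * b := by nlinarith [hr.2]
    nlinarith
  have := integral_sub (int_f1 ha hab hsupp hy) (int_f1 ha hab hsupp hx)
  rw [integral_sub (int_f1 ha hab hsupp hy) (int_f1 ha hab hsupp hx)] at hge
  have : gg P x + c ≤ gg P y := by rw [gg, gg]; linarith
  linarith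

lemma gg_mono {x y : ℝ} (hx : 0 ≤ x) (hxy : x ≤ y) : gg P x ≤ gg P y := by
  rcases eq_or_lt_of_le hxy with rfl | h
  · exact le_refl _
  · exact (gg_strict ha hab hsupp hx h).le

lemma gg_lower {x : ℝ} (hx : 0 ≤ x) : x * a / (1 + x * a) ≤ gg P x := by
  refine integral_ge_const (int_f1 ha hab hsupp hx) (hsupp.mono fun r hr => ?_)
  have h1 : 0 < 1 + x * a := by nlinarith
  have h2 : 0 < 1 + x * r := by nlinarith [hr.1, hr.2]
  rw [div_le_div_iff₀ h1 h2]
  nlinarith [hr.1]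

lemma int_f1sq {x : ℝ} (hx : 0 ≤ x) : Integrable (fun r : ℝ => (x * r / (1 + x * r)) ^ 2) P := by
  refine integrable_of_bound ((meas_f1 x).pow_const 2) 1 (hsupp.mono fun r hr => ?_)
  have h1 : 0 < 1 + x * r := by nlinarith [hr.1, hr.2]
  have hxr : 0 ≤ x * r := by nlinarith [hr.1]
  have ht1 : x * r / (1 + x * r) ≤ 1 := by rw [div_le_one h1]; nlinarith
  have ht0 : 0 ≤ x * r / (1 + x * r) := div_nonneg hxr h1.le
  rw [abs_of_nonneg (by positivity)]
  nlinarith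

lemma sq_expand {x : ℝ} : ∫ r, (x * r / (1 + x * r)) ^ 2 ∂P = x ^ 2 * JJ P x := by
  rw [JJ, ← integral_const_mul]
  congr 1; funext r; rw [div_pow, mul_pow, mul_div_assoc]

lemma key1 {x φ : ℝ} (hx : 0 < x) (hφ : 1 < φ) (hfix : 1 / φ = gg P x) :
    φ * (x ^ 2 * JJ P x) < 1 := by
  set c : ℝ := (x * a / (1 + x * a)) * (1 / (1 + x * b)) with hc
  have hb0 : 0 < b := ha.trans_le hab
  have hcpos : 0 < c := by
    apply mul_pos (div_pos (by positivity) (by positivity)) (div_pos one_pos (by positivity))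
  rw [gg] at hfix
  have hge : c ≤ ∫ r, (x * r / (1 + x * r) - (x * r / (1 + x * r)) ^ 2) ∂P := by
    refine integral_ge_const ((int_f1 ha hab hsupp hx.le).sub (int_f1sq ha hab hsupp hx.le))
      (hsupp.mono fun r hr => ?_)
    have h1 : 0 < 1 + x * r := by nlinarith [hr.1, hr.2]
    have h1a : 0 < 1 + x * a := by positivity
    have h1b : 0 < 1 + x * b := by positivity
    set t : ℝ := x * r / (1 + x * r) with htdef
    have htval : t * (1 + x * r) = x * r := by rw [htdef]; field_simp
    have ht0 : 0 ≤ t := div_nonneg (by nlinarith [hr.1]) h1.le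
    -- t - t^2 = t * (1 - t) = t / (1 + x*r) ≥ (xa/(1+xa)) * (1/(1+xb))
    have hlow : x * a / (1 + x * a) ≤ t := by
      rw [htdef, div_le_div_iff₀ h1a h1]; nlinarith [hr.1]
    have h1mt : 1 / (1 + x * b) ≤ 1 - t := by
      have : 1 - t = 1 / (1 + x * r) := by rw [eq_div_iff h1.ne']; linear_combination -htval
      rw [this, div_le_div_iff₀ h1b h1]; nlinarith [hr.2]
    have := mul_le_mul hlow h1mt (by positivity) ht0
    nlinarith
  rw [integral_sub (int_f1 ha hab hsupp hx.le) (int_f1sq ha hab hsupp hx.le),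
    sq_expand ha hab hsupp, ← hfix] at hge
  have h2 : x ^ 2 * JJ P x ≤ 1 / φ - c := by linarith
  have hφ0 : 0 < φ := by linarith
  calc φ * (x ^ 2 * JJ P x) ≤ φ * (1 / φ - c) := by nlinarith
  _ < φ * (1 / φ) := by nlinarith
  _ = 1 := by field_simp

lemma sq_integral_le {f : ℝ → ℝ} (h1 : Integrable f P) (h2 : Integrable (fun r => f r ^ 2) P) :
    (∫ r, f r ∂P) ^ 2 ≤ ∫ r, f r ^ 2 ∂P := by
  set m := ∫ r, f r ∂P with hm
  have hnn : 0 ≤ ∫ r, (f r - m) ^ 2 ∂P := integral_nonneg fun r => sq_nonneg _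
  have hexp : ∫ r, (f r - m) ^ 2 ∂P = (∫ r, f r ^ 2 ∂P) - 2 * m * m + m ^ 2 := by
    calc ∫ r, (f r - m) ^ 2 ∂P
        = ∫ r, ((f r ^ 2 - 2 * m * f r) + m ^ 2) ∂P := by congr 1; funext r; ring
      _ = (∫ r, (f r ^ 2 - 2 * m * f r) ∂P) + ∫ _r, (m ^ 2 : ℝ) ∂P :=
          integral_add (h2.sub (h1.const_mul (2 * m))) (integrable_const _)
      _ = (∫ r, f r ^ 2 ∂P) - (∫ r, 2 * m * f r ∂P) + m ^ 2 := by
          rw [integral_sub h2 (h1.const_mul (2 * m)), integral_const]; simp [measure_univ]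
      _ = (∫ r, f r ^ 2 ∂P) - 2 * m * m + m ^ 2 := by rw [integral_const_mul]
  nlinarith

lemma key2 {x φ : ℝ} (hx : 0 < x) (hφ : 1 < φ) (hfix : 1 / φ = gg P x) :
    1 / φ ≤ φ * (x ^ 2 * JJ P x) := by
  have h := sq_integral_le ha hab hsupp (int_f1 ha hab hsupp hx.le) (int_f1sq ha hab hsupp hx.le)
  rw [sq_expand ha hab hsupp] at h
  rw [gg] at hfix
  rw [← hfix] at h
  have hφ0 : 0 < φ := by linarith
  have h2 := mul_le_mul_of_nonneg_left h hφ0.le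
  have h3 : φ * (1 / φ) ^ 2 = 1 / φ := by field_simp
  linarith

lemma key3 {x φ : ℝ} (hx : 0 < x) (hφ : 1 < φ) (hfix : 1 / φ = gg P x) :
    φ * (x ^ 2 * JJ P x) ≤ x * b := by
  have hb0 : 0 < b := ha.trans_le hab
  rw [gg] at hfix
  have hle : ∫ r, (x * r / (1 + x * r)) ^ 2 ∂P ≤ x * b * ∫ r, x * r / (1 + x * r) ∂P := by
    rw [← integral_const_mul]
    refine integral_mono_ae (int_f1sq ha hab hsupp hx.le)
      ((int_f1 ha hab hsupp hx.le).const_mul _) (hsupp.mono fun r hr => ?_)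
    have h1 : 0 < 1 + x * r := by nlinarith [hr.1, hr.2]
    have ht0 : 0 ≤ x * r / (1 + x * r) := div_nonneg (by nlinarith [hr.1]) h1.le
    have htb : x * r / (1 + x * r) ≤ x * b := by
      calc x * r / (1 + x * r) ≤ x * r / 1 := by
            apply div_le_div_of_nonneg_left (by nlinarith [hr.1]) one_pos (by nlinarith [hr.1])
      _ ≤ x * b := by rw [div_one]; nlinarith [hr.2]
    simp only
    nlinarith
  rw [sq_expand ha hab hsupp, ← hfix] at hle
  have hφ0 : 0 < φ := by linarith
  calc φ * (x ^ 2 * JJ P x) ≤ φ * ((x*b) * (1/φ)) := by nlinarith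
  _ = x * b := by field_simp

lemma JJ_pt {x y r : ℝ} (hx : 0 ≤ x) (hxy : x ≤ y) (hr : r ∈ Icc a b) :
    0 ≤ r ^ 2 / (1 + x * r) ^ 2 - r ^ 2 / (1 + y * r) ^ 2 ∧
      r ^ 2 / (1 + x * r) ^ 2 - r ^ 2 / (1 + y * r) ^ 2 ≤ 2 * b ^ 3 * (y - x) := by
  have hr0 : 0 < r := lt_of_lt_of_le ha hr.1
  have hrb : r ≤ b := hr.2
  have hu : 1 ≤ 1 + x * r := by nlinarith
  have hw : 1 ≤ 1 + y * r := by nlinarith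
  have hu0 : 0 < 1 + x * r := by linarith
  have hw0 : 0 < 1 + y * r := by linarith
  constructor
  · have hxyr : x * r ≤ y * r := mul_le_mul_of_nonneg_right hxy hr0.le
    have h2 : (1 + x * r) ^ 2 ≤ (1 + y * r) ^ 2 := by
      nlinarith [mul_nonneg (sub_nonneg.2 hxyr) (by linarith : (0:ℝ) ≤ 2 + x * r + y * r)]
    exact sub_nonneg.2 (div_le_div_of_nonneg_left (sq_nonneg r) (by positivity) h2)
  · rw [div_sub_div _ _ (by positivity : ((1 + x * r) ^ 2 : ℝ) ≠ 0)
      (by positivity : ((1 + y * r) ^ 2 : ℝ) ≠ 0), div_le_iff₀ (by positivity)]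
    have lhs_eq : r ^ 2 * (1 + y * r) ^ 2 - (1 + x * r) ^ 2 * r ^ 2
        = (y - x) * r ^ 3 * ((1 + x * r) + (1 + y * r)) := by ring
    have h1 : r ^ 3 ≤ b ^ 3 := pow_le_pow_left₀ hr0.le hrb 3
    have h2 : (1 + x * r) + (1 + y * r) ≤ 2 * ((1 + x * r) * (1 + y * r)) := by nlinarith
    have h3 : (1 + x * r) * (1 + y * r) ≤ ((1 + x * r) * (1 + y * r)) ^ 2 := by nlinarith
    have p2 : (y - x) * r ^ 3 * ((1 + x * r) + (1 + y * r))
        ≤ (y - x) * b ^ 3 * ((1 + x * r) + (1 + y * r)) :=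
      mul_le_mul_of_nonneg_right
        (mul_le_mul_of_nonneg_left h1 (sub_nonneg.2 hxy)) (by linarith)
    have p1 : (y - x) * b ^ 3 * ((1 + x * r) + (1 + y * r))
        ≤ (y - x) * b ^ 3 * (2 * ((1 + x * r) * (1 + y * r))) :=
      mul_le_mul_of_nonneg_left h2
        (mul_nonneg (sub_nonneg.2 hxy) (by nlinarith : (0:ℝ) ≤ b ^ 3))
    have p3 : (y - x) * b ^ 3 * (2 * ((1 + x * r) * (1 + y * r)))
        ≤ (y - x) * b ^ 3 * (2 * ((1 + x * r) * (1 + y * r)) ^ 2) := by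
      apply mul_le_mul_of_nonneg_left ?_ (mul_nonneg (sub_nonneg.2 hxy) (by nlinarith : (0:ℝ) ≤ b ^ 3))
      nlinarith
    have expand : (y - x) * b ^ 3 * (2 * ((1 + x * r) * (1 + y * r)) ^ 2)
        = 2 * b ^ 3 * (y - x) * ((1 + x * r) ^ 2 * (1 + y * r) ^ 2) := by ring
    linarith

lemma JJ_lip_le {x y : ℝ} (hx : 0 ≤ x) (hxy : x ≤ y) :
    0 ≤ JJ P x - JJ P y ∧ JJ P x - JJ P y ≤ 2 * b ^ 3 * (y - x) := by
  have hy : 0 ≤ y := hx.trans hxy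
  have hsub : JJ P x - JJ P y
      = ∫ r, (r ^ 2 / (1 + x * r) ^ 2 - r ^ 2 / (1 + y * r) ^ 2) ∂P := by
    rw [integral_sub (int_f2 ha hab hsupp hx) (int_f2 ha hab hsupp hy)]; rfl
  constructor
  · rw [hsub]
    exact integral_ge_const ((int_f2 ha hab hsupp hx).sub (int_f2 ha hab hsupp hy))
      (hsupp.mono fun r hr => (JJ_pt ha hab hsupp hx hxy hr).1)
  · rw [hsub]
    exact integral_le_const ((int_f2 ha hab hsupp hx).sub (int_f2 ha hab hsupp hy))
      (hsupp.mono fun r hr => (JJ_pt ha hab hsupp hx hxy hr).2)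

lemma JJ_cont : ContinuousOn (JJ P) (Ici 0) := by
  have hb0 : 0 < b := ha.trans_le hab
  refine LipschitzOnWith.continuousOn (K := Real.toNNReal (2 * b ^ 3))
    (LipschitzOnWith.of_dist_le_mul fun x hx y hy => ?_)
  rw [Real.dist_eq, Real.dist_eq, Real.coe_toNNReal _ (by positivity)]
  rcases le_total x y with h | h
  · obtain ⟨h1, h2⟩ := JJ_lip_le ha hab hsupp hx h
    rw [abs_of_nonneg h1, abs_of_nonpos (by linarith : x - y ≤ 0)]
    linarith
  · obtain ⟨h1, h2⟩ := JJ_lip_le ha hab hsupp hy h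
    rw [abs_of_nonpos (by linarith : JJ P x - JJ P y ≤ 0), abs_of_nonneg (by linarith : (0:ℝ) ≤ x - y)]
    linarith

lemma v_upper {x φ : ℝ} (hx : 0 < x) (hφ : 1 < φ) (hfix : 1 / φ = gg P x) :
    x * (a * (φ - 1)) ≤ 1 := by
  have h := gg_lower ha hab hsupp hx.le
  rw [← hfix] at h
  have h1a : 0 < 1 + x * a := by positivity
  have hφ0 : 0 < φ := by linarith
  rw [div_le_div_iff₀ h1a hφ0] at h
  nlinarith

end

/-- **Properties of the variance and bias inflation factors `ṽ` and `ṽ_g`.**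
Let `0 < a ≤ b`, `P` a probability measure supported in `[a, b]`, and `v : (1, ∞) → ℝ`
with `v φ > 0` the unique solution of `1/φ = ∫ v(φ)·r/(1 + v(φ)·r) dP(r)`. With
`D(φ) = 1/v(φ)² − φ ∫ r²/(1 + v(φ)·r)² dP(r)`, `ṽ(φ) = 1/D(φ)` and
`ṽ_g(φ) = ṽ(φ)·φ ∫ r²/(1 + v(φ)·r)² dP(r)`, we have:
(i) `D(φ) > 0` on `(1, ∞)`; (ii) `ṽ` and `ṽ_g` are continuous on `(1, ∞)`;
(iii) `ṽ(φ) → +∞` and `ṽ_g(φ) → +∞` as `φ → 1⁺`; and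
(iv) `ṽ(φ) → 0` and `ṽ_g(φ) → 0` as `φ → ∞`. -/
theorem inflation_factors_properties (a b : ℝ) (ha : 0 < a) (hab : a ≤ b)
    (P : Measure ℝ) [IsProbabilityMeasure P] (hsupp : ∀ᵐ r ∂P, r ∈ Set.Icc a b)
    (v : ℝ → ℝ)
    (hv : ∀ φ ∈ Set.Ioi (1 : ℝ),
      0 < v φ ∧ 1 / φ = ∫ r, v φ * r / (1 + v φ * r) ∂P)
    (D tv tvg : ℝ → ℝ)
    (hD : ∀ φ ∈ Set.Ioi (1 : ℝ),
      D φ = 1 / (v φ) ^ 2 - φ * ∫ r, r ^ 2 / (1 + v φ * r) ^ 2 ∂P)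
    (htv : ∀ φ ∈ Set.Ioi (1 : ℝ), tv φ = 1 / D φ)
    (htvg : ∀ φ ∈ Set.Ioi (1 : ℝ),
      tvg φ = tv φ * (φ * ∫ r, r ^ 2 / (1 + v φ * r) ^ 2 ∂P)) :
    (∀ φ ∈ Set.Ioi (1 : ℝ), 0 < D φ) ∧
    ContinuousOn tv (Set.Ioi 1) ∧
    ContinuousOn tvg (Set.Ioi 1) ∧
    Tendsto tv (nhdsWithin 1 (Set.Ioi 1)) atTop ∧
    Tendsto tvg (nhdsWithin 1 (Set.Ioi 1)) atTop ∧
    Tendsto tv atTop (nhds 0) ∧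
    Tendsto tvg atTop (nhds 0) := by
  have hb0 : 0 < b := ha.trans_le hab
  have hvpos : ∀ φ ∈ Set.Ioi (1 : ℝ), 0 < v φ := fun φ hφ => (hv φ hφ).1
  have hvfix : ∀ φ ∈ Set.Ioi (1 : ℝ), 1 / φ = gg P (v φ) := fun φ hφ => (hv φ hφ).2
  have hD' : ∀ φ ∈ Set.Ioi (1 : ℝ), D φ = 1 / (v φ) ^ 2 - φ * JJ P (v φ) := hD
  have htvg' : ∀ φ ∈ Set.Ioi (1 : ℝ), tvg φ = tv φ * (φ * JJ P (v φ)) := htvg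
  have hJJnn : ∀ x : ℝ, 0 ≤ JJ P x := fun x =>
    integral_nonneg fun r => div_nonneg (sq_nonneg _) (sq_nonneg _)
  -- antitonicity of v
  have hanti : ∀ φ ∈ Set.Ioi (1 : ℝ), ∀ ψ ∈ Set.Ioi (1 : ℝ), φ < ψ → v ψ < v φ := by
    intro φ hφ ψ hψ hlt
    by_contra hcon
    push_neg at hcon
    have h1 : gg P (v φ) ≤ gg P (v ψ) := gg_mono ha hab hsupp (hvpos φ hφ).le hcon
    rw [← hvfix φ hφ, ← hvfix ψ hψ] at h1
    have h2 : 1 / ψ < 1 / φ :=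
      one_div_lt_one_div_of_lt (lt_trans one_pos hφ) hlt
    linarith
  -- continuity of v
  have hvcont : ContinuousOn v (Set.Ioi 1) := by
    intro φ0 hφ0
    have hφ0' : (1 : ℝ) < φ0 := hφ0
    have hvφ0 : 0 < v φ0 := hvpos φ0 hφ0
    apply Metric.tendsto_nhds.2
    intro ε hε
    set ε' := min ε (v φ0 / 2) with hε'def
    have hε'0 : 0 < ε' := lt_min hε (by linarith)
    have hε'le : ε' ≤ ε := min_le_left _ _
    have hlo0 : 0 < v φ0 - ε' := by
      have := min_le_right ε (v φ0 / 2); linarith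
    have hlo : gg P (v φ0 - ε') < 1 / φ0 := by
      rw [hvfix φ0 hφ0]
      exact gg_strict ha hab hsupp hlo0.le (by linarith)
    have hhi : 1 / φ0 < gg P (v φ0 + ε') := by
      rw [hvfix φ0 hφ0]
      exact gg_strict ha hab hsupp hvφ0.le (by linarith)
    have hc : ContinuousAt (fun φ : ℝ => 1 / φ) φ0 :=
      ContinuousAt.div continuousAt_const continuousAt_id (by linarith)
    have hev : ∀ᶠ φ in nhds φ0,
        1 / φ ∈ Set.Ioo (gg P (v φ0 - ε')) (gg P (v φ0 + ε')) :=
      hc (Ioo_mem_nhds hlo hhi)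
    have hev' := eventually_nhdsWithin_of_eventually_nhds
      (s := Set.Ioi (1 : ℝ)) hev
    filter_upwards [hev', eventually_mem_nhdsWithin] with φ h1 h2
    have hfixφ := hvfix φ h2
    have hvφ := hvpos φ h2
    rw [hfixφ] at h1
    have hgt : v φ0 - ε' < v φ := by
      by_contra hcon
      push_neg at hcon
      have := gg_mono ha hab hsupp hvφ.le hcon
      exact absurd (lt_of_lt_of_le h1.1 this) (lt_irrefl _)
    have hlt2 : v φ < v φ0 + ε' := by
      by_contra hcon
      push_neg at hcon
      have := gg_mono ha hab hsupp (by linarith : (0:ℝ) ≤ v φ0 + ε') hcon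
      exact absurd (lt_of_le_of_lt this h1.2) (lt_irrefl _)
    rw [Real.dist_eq]
    have : |v φ - v φ0| < ε' := abs_sub_lt_iff.2 ⟨by linarith, by linarith⟩
    linarith
  -- positivity of D
  have hDpos : ∀ φ ∈ Set.Ioi (1 : ℝ), 0 < D φ := by
    intro φ hφ
    have hφ1 : (1 : ℝ) < φ := hφ
    have hx := hvpos φ hφ
    have hk := key1 ha hab hsupp hx hφ1 (hvfix φ hφ)
    have hx2 : 0 < (v φ) ^ 2 := by positivity
    rw [hD' φ hφ, sub_pos, lt_div_iff₀ hx2]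
    nlinarith
  have hDne : ∀ φ ∈ Set.Ioi (1 : ℝ), D φ ≠ 0 := fun φ hφ => (hDpos φ hφ).ne'
  -- continuity
  have hJv : ContinuousOn (fun φ => JJ P (v φ)) (Set.Ioi 1) :=
    (JJ_cont ha hab hsupp).comp hvcont fun φ hφ => (hvpos φ hφ).le
  have hDexpr : ContinuousOn (fun φ => 1 / (v φ) ^ 2 - φ * JJ P (v φ)) (Set.Ioi 1) := by
    apply ContinuousOn.sub
    · exact continuousOn_const.div (hvcont.pow 2) fun φ hφ => pow_ne_zero 2 (hvpos φ hφ).ne'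
    · exact continuousOn_id.mul hJv
  have hDcont : ContinuousOn D (Set.Ioi 1) := hDexpr.congr fun φ hφ => hD' φ hφ
  have htvcont : ContinuousOn tv (Set.Ioi 1) :=
    (continuousOn_const.div hDcont hDne).congr fun φ hφ => htv φ hφ
  have htvgcont : ContinuousOn tvg (Set.Ioi 1) :=
    (htvcont.mul (continuousOn_id.mul hJv)).congr fun φ hφ => htvg' φ hφ
  -- basic algebraic identities
  have he1 : ∀ φ ∈ Set.Ioi (1 : ℝ),
      (v φ) ^ 2 * D φ = 1 - φ * ((v φ) ^ 2 * JJ P (v φ)) := by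
    intro φ hφ
    have hne : v φ ≠ 0 := (hvpos φ hφ).ne'
    rw [hD' φ hφ]
    field_simp
  have hspos : ∀ φ ∈ Set.Ioi (1 : ℝ), 0 < (v φ) ^ 2 * D φ := fun φ hφ =>
    mul_pos (pow_pos (hvpos φ hφ) 2) (hDpos φ hφ)
  have hsle : ∀ φ ∈ Set.Ioi (1 : ℝ), (v φ) ^ 2 * D φ ≤ 1 - 1 / φ := by
    intro φ hφ
    have hφ1 : (1 : ℝ) < φ := hφ
    have k2 := key2 ha hab hsupp (hvpos φ hφ) hφ1 (hvfix φ hφ)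
    linarith [he1 φ hφ]
  have he2 : ∀ φ ∈ Set.Ioi (1 : ℝ), tvg φ * ((v φ) ^ 2 * D φ) = 1 - (v φ) ^ 2 * D φ := by
    intro φ hφ
    rw [htvg' φ hφ, htv φ hφ]
    have hne : D φ ≠ 0 := hDne φ hφ
    have lhs : 1 / D φ * (φ * JJ P (v φ)) * ((v φ) ^ 2 * D φ)
        = φ * ((v φ) ^ 2 * JJ P (v φ)) := by field_simp
    rw [lhs]
    linarith [he1 φ hφ]
  -- lower bound for tvg near 1
  have htvglb : ∀ φ ∈ Set.Ioi (1 : ℝ), (φ - 1)⁻¹ ≤ tvg φ := by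
    intro φ hφ
    have hφ1 : (1 : ℝ) < φ := hφ
    have hφ0 : (0 : ℝ) < φ := by linarith
    have hφinv : 1 / φ * φ = 1 := by field_simp
    set s := (v φ) ^ 2 * D φ with hs
    have hs0 : 0 < s := hspos φ hφ
    have hsle' : s ≤ 1 - 1 / φ := hsle φ hφ
    have h4 : s * φ ≤ φ - 1 := by nlinarith
    have h5 : s ≤ (φ - 1) * (1 - s) := by nlinarith
    have e3 : tvg φ * (φ - 1) * s = (φ - 1) * (1 - s) := by
      rw [show tvg φ * (φ - 1) * s = tvg φ * s * (φ - 1) by ring, he2 φ hφ]; ring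
    rw [inv_eq_one_div, div_le_iff₀ (by linarith : (0:ℝ) < φ - 1)]
    exact le_of_mul_le_mul_right (by linarith : 1 * s ≤ tvg φ * (φ - 1) * s) hs0
  -- tendsto (φ-1)⁻¹ atTop at 1⁺
  have hbase : Tendsto (fun φ : ℝ => (φ - 1)⁻¹) (nhdsWithin 1 (Set.Ioi 1)) atTop := by
    apply tendsto_inv_nhdsGT_zero.comp
    apply tendsto_nhdsWithin_of_tendsto_nhds_of_eventually_within
    · have : Tendsto (fun φ : ℝ => φ - 1) (nhds 1) (nhds 0) := by
        have := ((continuous_id.sub continuous_const).tendsto (1 : ℝ) :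
          Tendsto (fun φ : ℝ => φ - 1) (nhds 1) (nhds (1 - 1)))
        exact this.mono_right (by norm_num)
      exact this.mono_left nhdsWithin_le_nhds
    · exact eventually_mem_nhdsWithin.mono fun φ hφ => Set.mem_Ioi.2 (sub_pos.2 hφ)
  have htvg_atTop : Tendsto tvg (nhdsWithin 1 (Set.Ioi 1)) atTop := by
    refine tendsto_atTop_mono' _ ?_ hbase
    exact eventually_mem_nhdsWithin.mono fun φ hφ => htvglb φ hφ
  -- lower bound for tv near 1
  have h2i : (2 : ℝ) ∈ Set.Ioi (1 : ℝ) := by norm_num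
  have hv2 : 0 < v 2 := hvpos 2 h2i
  have htvlb : ∀ φ ∈ Set.Ioi (1 : ℝ), φ < 2 → (v 2) ^ 2 * (φ - 1)⁻¹ ≤ tv φ := by
    intro φ hφ hφ2
    have hφ1 : (1 : ℝ) < φ := hφ
    have hφ0 : (0 : ℝ) < φ := by linarith
    have hφinv : 1 / φ * φ = 1 := by field_simp
    have hvv : v 2 < v φ := hanti φ hφ 2 h2i hφ2
    have hsle' : (v φ) ^ 2 * D φ ≤ 1 - 1 / φ := hsle φ hφ
    have hDle : D φ ≤ (φ - 1) / (v 2) ^ 2 := by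
      rw [le_div_iff₀ (pow_pos hv2 2)]
      have h1 : (v 2) ^ 2 * D φ ≤ (v φ) ^ 2 * D φ :=
        mul_le_mul_of_nonneg_right (by nlinarith) (hDpos φ hφ).le
      have h2 : 1 - 1 / φ ≤ φ - 1 := by nlinarith
      linarith
    have := one_div_le_one_div_of_le (hDpos φ hφ) hDle
    rw [one_div_div] at this
    rw [htv φ hφ]
    calc (v 2) ^ 2 * (φ - 1)⁻¹ = (v 2) ^ 2 / (φ - 1) := by rw [div_eq_mul_inv]
    _ ≤ 1 / D φ := this
  have htv_atTop : Tendsto tv (nhdsWithin 1 (Set.Ioi 1)) atTop := by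
    refine tendsto_atTop_mono' _ ?_ (hbase.const_mul_atTop (pow_pos hv2 2))
    have hev2 : ∀ᶠ φ in nhdsWithin (1:ℝ) (Set.Ioi 1), φ < (2:ℝ) :=
      eventually_nhdsWithin_of_eventually_nhds
        (eventually_of_mem (Iio_mem_nhds (by norm_num : (1:ℝ) < 2)) fun φ h => h)
    filter_upwards [hev2, eventually_mem_nhdsWithin] with φ h1 h2
    exact htvlb φ h2 h1
  -- limits at infinity
  have hinvtend : Tendsto (fun φ : ℝ => (a * (φ - 1))⁻¹) atTop (nhds 0) := by
    apply Tendsto.inv_tendsto_atTop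
    apply Tendsto.const_mul_atTop ha
    simpa [sub_eq_add_neg] using tendsto_atTop_add_const_right atTop (-1 : ℝ) tendsto_id
  -- eventual bounds
  have hev : ∀ᶠ φ : ℝ in atTop,
      (0 ≤ tv φ ∧ tv φ ≤ 2 * ((a * (φ - 1))⁻¹) ^ 2) ∧
      (0 ≤ tvg φ ∧ tvg φ ≤ 2 * b * (a * (φ - 1))⁻¹) := by
    filter_upwards [eventually_ge_atTop (max 2 (1 + 2 * b / a))] with φ hφmax
    have hφ2 : (2 : ℝ) ≤ φ := le_trans (le_max_left _ _) hφmax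
    have hφb : 1 + 2 * b / a ≤ φ := le_trans (le_max_right _ _) hφmax
    have hφ : φ ∈ Set.Ioi (1 : ℝ) := by simp only [Set.mem_Ioi]; linarith
    have hφ1 : (1 : ℝ) < φ := hφ
    have hx := hvpos φ hφ
    have haφ : 0 < a * (φ - 1) := by nlinarith
    have hup := v_upper ha hab hsupp hx hφ1 (hvfix φ hφ)
    -- v φ ≤ (a*(φ-1))⁻¹
    have hxle : v φ ≤ (a * (φ - 1))⁻¹ := by
      rw [inv_eq_one_div, le_div_iff₀ haφ]
      nlinarith
    -- b * v φ ≤ 1/2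
    have hbv : b * v φ ≤ 1 / 2 := by
      have h1 : 2 * b ≤ a * (φ - 1) := by
        have := (div_le_iff₀ ha).1 (by linarith : 2 * b / a ≤ φ - 1)
        linarith
      nlinarith
    have hs0 : 0 < (v φ) ^ 2 * D φ := hspos φ hφ
    have k3 := key3 ha hab hsupp hx hφ1 (hvfix φ hφ)
    have he1' := he1 φ hφ
    have hs_half : (1:ℝ) / 2 ≤ (v φ) ^ 2 * D φ := by nlinarith
    have tv0 : 0 ≤ tv φ := by
      rw [htv φ hφ]
      exact (one_div_pos.2 (hDpos φ hφ)).le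
    have htv2 : tv φ ≤ 2 * (v φ) ^ 2 := by
      rw [htv φ hφ, div_le_iff₀ (hDpos φ hφ)]
      nlinarith
    have hxx : v φ * v φ ≤ (a * (φ - 1))⁻¹ * (a * (φ - 1))⁻¹ :=
      mul_le_mul hxle hxle hx.le (le_trans hx.le hxle)
    have tvg0 : 0 ≤ tvg φ := by
      rw [htvg' φ hφ]
      exact mul_nonneg tv0 (mul_nonneg (by linarith) (hJJnn _))
    have e2 := he2 φ hφ
    have h1s : 1 - (v φ) ^ 2 * D φ ≤ v φ * b := by nlinarith
    have hmul := mul_le_mul_of_nonneg_left hs_half tvg0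
    have hbx : b * v φ ≤ b * (a * (φ - 1))⁻¹ :=
      mul_le_mul_of_nonneg_left hxle hb0.le
    refine ⟨⟨tv0, by linarith [htv2, hxx]⟩, ⟨tvg0, by linarith [hmul, e2, h1s, hbx]⟩⟩
  refine ⟨hDpos, htvcont, htvgcont, htv_atTop, htvg_atTop, ?_, ?_⟩
  · have hg1 : Tendsto (fun φ : ℝ => 2 * ((a * (φ - 1))⁻¹) ^ 2) atTop (nhds 0) := by
      have h1 := (hinvtend.pow 2).const_mul (2:ℝ)
      simpa using h1
    refine tendsto_of_tendsto_of_tendsto_of_le_of_le' tendsto_const_nhds hg1 ?_ ?_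
    · exact hev.mono fun φ h => h.1.1
    · exact hev.mono fun φ h => h.1.2
  · have hg2 : Tendsto (fun φ : ℝ => 2 * b * (a * (φ - 1))⁻¹) atTop (nhds 0) := by
      have h1 := hinvtend.const_mul (2 * b)
      simpa using h1
    refine tendsto_of_tendsto_of_tendsto_of_le_of_le' tendsto_const_nhds hg2 ?_ ?_
    · exact hev.mono fun φ h => h.2.1
    · exact hev.mono fun φ h => h.2.2
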